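/- Let A be a real symmetric n×n matrix with nonnegative diagonal entries that is (weakly) diagonally dominant: A_ii ≥ Σ_{j≠i} |A_ij| for every i. Let F be a subset of the index set. Define the matrix M by: M_ii = 2·A_ii - Σ_{j∈F} |A_ij| for i ∈ F (the sum over j ∈ F including j = i when i ∈ F); M_ij = 0 whenever i ≠ j and both i ∈ F and j ∈ F; and M_ij = A_ij in all other positions. Then M is positive semidefinite. -/

import Mathlib

open Matrix

private lemma swap_erase_sum {n : Type*} [Fintype n] [DecidableEq n] (f : n → n → ℝ) :
    ∑ i, ∑ j ∈ Finset.univ.erase i, f i j = ∑ j, ∑ i ∈ Finset.univ.erase j, f i j := by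
  simp only [← Finset.filter_ne', Finset.sum_filter]
  rw [Finset.sum_comm]
  refine Finset.sum_congr rfl fun j _ => Finset.sum_congr rfl fun i _ => ?_
  by_cases h : i = j <;> simp [h, Ne.symm]

lemma dd_posSemidef {n : Type*} [Fintype n] [DecidableEq n]
    (M : Matrix n n ℝ) (hsym : ∀ i j, M j i = M i j)
    (hdd : ∀ i, ∑ j ∈ Finset.univ.erase i, |M i j| ≤ M i i) :
    M.PosSemidef := by
  rw [Matrix.posSemidef_iff_dotProduct_mulVec]
  constructor
  · ext i j
    simp [Matrix.conjTranspose_apply, hsym]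
  · intro x
    have hx : (star x ⬝ᵥ M.mulVec x) = ∑ i, ∑ j, x i * (M i j * x j) := by
      simp [dotProduct, Matrix.mulVec, Finset.mul_sum]
    rw [hx]
    have key : ∀ i, (M i i * x i ^ 2
        - ∑ j ∈ Finset.univ.erase i, (|M i j| * x i ^ 2 / 2 + |M i j| * x j ^ 2 / 2))
        ≤ ∑ j, x i * (M i j * x j) := by
      intro i
      rw [← Finset.add_sum_erase _ _ (Finset.mem_univ i)]
      have h1 : ∀ j ∈ Finset.univ.erase i,
          -(|M i j| * x i ^ 2 / 2 + |M i j| * x j ^ 2 / 2) ≤ x i * (M i j * x j) := by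
        intro j _
        have h2 : 0 ≤ |M i j| - M i j := by
          have := le_abs_self (M i j); linarith
        have h3 : 0 ≤ |M i j| + M i j := by
          have := neg_abs_le (M i j); linarith
        nlinarith [mul_nonneg h2 (sq_nonneg (x i - x j)), mul_nonneg h3 (sq_nonneg (x i + x j))]
      have h4 := Finset.sum_le_sum h1
      rw [Finset.sum_neg_distrib] at h4
      have : M i i * x i ^ 2 = x i * (M i i * x i) := by ring
      linarith
    have hsum := Finset.sum_le_sum (s := Finset.univ) (fun i _ => key i)
    have hB : ∑ i, ∑ j ∈ Finset.univ.erase i, |M i j| * x j ^ 2 / 2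
        = ∑ i, ∑ j ∈ Finset.univ.erase i, |M i j| * x i ^ 2 / 2 := by
      rw [swap_erase_sum]
      refine Finset.sum_congr rfl fun j _ => Finset.sum_congr rfl fun i _ => ?_
      rw [hsym]
    have hC : ∀ i, ∑ j ∈ Finset.univ.erase i, |M i j| * x i ^ 2 / 2
        = (∑ j ∈ Finset.univ.erase i, |M i j|) * x i ^ 2 / 2 := by
      intro i; rw [Finset.sum_mul, Finset.sum_div]
    have hfin : (0:ℝ) ≤ ∑ i, (M i i * x i ^ 2
        - ∑ j ∈ Finset.univ.erase i, (|M i j| * x i ^ 2 / 2 + |M i j| * x j ^ 2 / 2)) := by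
      have expand : ∀ i, (M i i * x i ^ 2
          - ∑ j ∈ Finset.univ.erase i, (|M i j| * x i ^ 2 / 2 + |M i j| * x j ^ 2 / 2))
          = M i i * x i ^ 2 - (∑ j ∈ Finset.univ.erase i, |M i j| * x i ^ 2 / 2)
            - (∑ j ∈ Finset.univ.erase i, |M i j| * x j ^ 2 / 2) := by
        intro i; rw [Finset.sum_add_distrib]; ring
      simp only [expand]
      rw [Finset.sum_sub_distrib, Finset.sum_sub_distrib, hB]
      have : ∀ i, M i i * x i ^ 2 - (∑ j ∈ Finset.univ.erase i, |M i j| * x i ^ 2 / 2)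
          - (∑ j ∈ Finset.univ.erase i, |M i j| * x i ^ 2 / 2) ≥ 0 := by
        intro i
        rw [hC]
        nlinarith [hdd i, sq_nonneg (x i)]
      calc (0:ℝ) ≤ ∑ i, (M i i * x i ^ 2 - (∑ j ∈ Finset.univ.erase i, |M i j| * x i ^ 2 / 2)
          - (∑ j ∈ Finset.univ.erase i, |M i j| * x i ^ 2 / 2)) :=
            Finset.sum_nonneg fun i _ => this i
        _ = _ := by rw [Finset.sum_sub_distrib, Finset.sum_sub_distrib]
    linarith

/-- For a symmetric, weakly diagonally dominant matrix `A` with nonnegative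
diagonal and a subset `F` of its indices, the matrix `M` obtained from `A` by
replacing the `F`-`F` block with the diagonal matrix with entries
`2 A_ii - ∑_{j ∈ F} |A_ij|` is positive semidefinite.  (In AMGr block notation,
`M = [[D_FF, -A_FC], [-A_FCᵀ, A_CC]]`.) -/
theorem amgr_replaced_block_posSemidef
    {n : Type*} [Fintype n] [DecidableEq n]
    (A : Matrix n n ℝ) (hsym : Aᵀ = A)
    (hdiag : ∀ i, 0 ≤ A i i)
    (hdd : ∀ i, ∑ j ∈ Finset.univ.erase i, |A i j| ≤ A i i)
    (F : Finset n)
    (M : Matrix n n ℝ)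
    (hM : M = fun i j =>
      if i ∈ F ∧ j ∈ F then
        (if i = j then 2 * A i i - ∑ k ∈ F, |A i k| else 0)
      else A i j) :
    M.PosSemidef := by
  subst hM
  have hAsym : ∀ i j, A j i = A i j := fun i j => congrFun (congrFun hsym i) j
  apply dd_posSemidef
  · intro i j
    by_cases hij : i = j
    · subst hij; rfl
    · by_cases hi : i ∈ F <;> by_cases hj : j ∈ F <;>
        simp [hi, hj, hij, Ne.symm hij, hAsym i j]
  · intro i
    by_cases hi : i ∈ F
    · -- diagonal entry: 2 A i i - ∑ k ∈ F, |A i k|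
      have hrow : ∀ j ∈ Finset.univ.erase i,
          |if i ∈ F ∧ j ∈ F then (if i = j then 2 * A i i - ∑ k ∈ F, |A i k| else 0) else A i j|
          = if j ∈ F then 0 else |A i j| := by
        intro j hj
        have hij : i ≠ j := (Finset.ne_of_mem_erase hj).symm
        by_cases hjF : j ∈ F <;> simp [hi, hjF, hij]
      rw [Finset.sum_congr rfl hrow, if_pos (⟨hi, hi⟩ : i ∈ F ∧ i ∈ F), if_pos rfl]
      rw [Finset.sum_ite, Finset.sum_const_zero, zero_add]
      -- goal: ∑ j ∈ (erase i).filter (¬ · ∈ F), |A i j| ≤ 2 A i i - ∑ k ∈ F |A i k|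
      have hsplit : (∑ j ∈ (Finset.univ.erase i).filter (fun j => ¬ j ∈ F), |A i j|)
          + ∑ j ∈ (Finset.univ.erase i).filter (fun j => j ∈ F), |A i j|
          = ∑ j ∈ Finset.univ.erase i, |A i j| := by
        rw [add_comm]; exact Finset.sum_filter_add_sum_filter_not _ _ _
      have hFerase : (Finset.univ.erase i).filter (fun j => j ∈ F) = F.erase i := by
        ext j; simp [and_comm]
      have hFsum : ∑ k ∈ F, |A i k| = |A i i| + ∑ k ∈ F.erase i, |A i k| :=
        (Finset.add_sum_erase _ _ hi).symm
      rw [hFerase] at hsplit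
      have habs : |A i i| = A i i := abs_of_nonneg (hdiag i)
      have := hdd i
      linarith [hsplit, hFsum, habs]
    · -- row of A
      have hrow : ∀ j,
          (if i ∈ F ∧ j ∈ F then (if i = j then 2 * A i i - ∑ k ∈ F, |A i k| else 0) else A i j)
          = A i j := by
        intro j; simp [hi]
      simp only [hi, false_and, if_false]
      exact hdd i
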